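/- Fix n ≥ 5. Let G be the group presented by generators σ₁, ..., σ_{n−1}, a₁, a₂ subject to the Zariski relations: (1) σᵢσⱼ = σⱼσᵢ for |i−j| ≥ 2; (2) σᵢσ_{i+1}σᵢ = σ_{i+1}σᵢσ_{i+1}; (3) σᵢa_k = a_kσᵢ for k = 1,2 and i ≥ 2; (4) (σ₁⁻¹a_k)² = (a_kσ₁⁻¹)² for k = 1,2; (5) σ₁⋯σ_{n−2}σ_{n−1}²σ_{n−2}⋯σ₁ = a₁a₂⁻¹a₁⁻¹a₂; (6) a₂σ₁⁻¹a₁⁻¹σ₁a₂⁻¹σ₁⁻¹a₁σ₁ = σ₁². Then the abelianization G/[G,G] is isomorphic to ℤ × ℤ × (ℤ/2ℤ). -/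

import Mathlib

/-- Generators of the Zariski presentation: `Sum.inl i` is σ_{i+1}
(for `i : Fin (n-1)`, so σ₁,…,σ_{n−1}), `Sum.inr k` is a_{k+1} (a₁, a₂). -/
abbrev ZariskiGen (n : ℕ) := Fin (n - 1) ⊕ Fin 2

/-- σ generators in the free group. -/
def zσ (n : ℕ) (i : Fin (n - 1)) : FreeGroup (ZariskiGen n) := FreeGroup.of (Sum.inl i)

/-- a generators in the free group. -/
def za (n : ℕ) (k : Fin 2) : FreeGroup (ZariskiGen n) := FreeGroup.of (Sum.inr k)

/-- The product σ₁ ⋯ σ_{n−1} of all σ generators in order. -/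
def zariskiFullProd (n : ℕ) : FreeGroup (ZariskiGen n) :=
  (List.ofFn (zσ n)).prod

/-- The Zariski relations of the torus braid group `B_n(T²)`, written as
words `lhs * rhs⁻¹` in the free group on the generators. Note that
σ₁ ⋯ σ_{n−2} σ_{n−1}² σ_{n−2} ⋯ σ₁ = (σ₁ ⋯ σ_{n−1}) · (σ_{n−1} ⋯ σ₁). -/
def zariskiRels (n : ℕ) : Set (FreeGroup (ZariskiGen n)) :=
  -- (1) σᵢ σⱼ = σⱼ σᵢ for |i − j| ≥ 2
  {r | ∃ i j : Fin (n - 1), (i : ℕ) + 2 ≤ (j : ℕ) ∧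
        r = zσ n i * zσ n j * (zσ n j * zσ n i)⁻¹} ∪
  -- (2) σᵢ σ_{i+1} σᵢ = σ_{i+1} σᵢ σ_{i+1}
  {r | ∃ i j : Fin (n - 1), (j : ℕ) = (i : ℕ) + 1 ∧
        r = zσ n i * zσ n j * zσ n i * (zσ n j * zσ n i * zσ n j)⁻¹} ∪
  -- (3) σᵢ a_k = a_k σᵢ for i ≥ 2 (0-indexed: i ≥ 1)
  {r | ∃ i : Fin (n - 1), 1 ≤ (i : ℕ) ∧ ∃ k : Fin 2,
        r = zσ n i * za n k * (za n k * zσ n i)⁻¹} ∪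
  -- (4) (σ₁⁻¹ a_k)² = (a_k σ₁⁻¹)²
  {r | ∃ i : Fin (n - 1), (i : ℕ) = 0 ∧ ∃ k : Fin 2,
        r = ((zσ n i)⁻¹ * za n k) ^ 2 * (((za n k) * (zσ n i)⁻¹) ^ 2)⁻¹} ∪
  -- (5) σ₁ ⋯ σ_{n−2} σ_{n−1}² σ_{n−2} ⋯ σ₁ = a₁ a₂⁻¹ a₁⁻¹ a₂
  {r | r = zariskiFullProd n * (List.ofFn (zσ n)).reverse.prod *
        (za n 0 * (za n 1)⁻¹ * (za n 0)⁻¹ * za n 1)⁻¹} ∪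
  -- (6) a₂ σ₁⁻¹ a₁⁻¹ σ₁ a₂⁻¹ σ₁⁻¹ a₁ σ₁ = σ₁²
  {r | ∃ i : Fin (n - 1), (i : ℕ) = 0 ∧
        r = za n 1 * (zσ n i)⁻¹ * (za n 0)⁻¹ * zσ n i * (za n 1)⁻¹ *
              (zσ n i)⁻¹ * za n 0 * zσ n i * ((zσ n i) ^ 2)⁻¹}

namespace Stmt17

/-- the target abelian group -/
abbrev T : Type := Multiplicative (ℤ × ℤ × ZMod 2)

/-- images of the generators in `T` -/
def fgen (n : ℕ) : ZariskiGen n → T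
  | Sum.inl _ => Multiplicative.ofAdd (0, 0, 1)
  | Sum.inr k => if k = 0 then Multiplicative.ofAdd (1, 0, 0) else Multiplicative.ofAdd (0, 1, 0)

lemma word_eq_one {M : Type*} [CommGroup M] (s a1 a2 : M) :
    a2 * s⁻¹ * a1⁻¹ * s * a2⁻¹ * s⁻¹ * a1 * s = 1 := by
  have h : Additive.ofMul a2 + -(Additive.ofMul s) + -(Additive.ofMul a1) + Additive.ofMul s
      + -(Additive.ofMul a2) + -(Additive.ofMul s) + Additive.ofMul a1 + Additive.ofMul s
      = (0 : Additive M) := by abel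
  exact h

lemma braid_cancel {M : Type*} [CommGroup M] {x y : M} (h : x*y*x = y*x*y) : x = y := by
  rw [mul_comm y x] at h
  exact mul_left_cancel h

lemma fgen_rels (n : ℕ) : ∀ r ∈ zariskiRels n, FreeGroup.lift (fgen n) r = 1 := by
  intro r hr
  rcases hr with ((((⟨i, j, hij, rfl⟩ | ⟨i, j, hij, rfl⟩) | ⟨i, hi, k, rfl⟩) |
      ⟨i, hi, k, rfl⟩) | rfl) | ⟨i, hi, rfl⟩
  · simp only [zσ, map_mul, map_inv, FreeGroup.lift_apply_of, fgen]; decide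
  · simp only [zσ, map_mul, map_inv, FreeGroup.lift_apply_of, fgen]; decide
  · simp only [zσ, za, map_mul, map_inv, FreeGroup.lift_apply_of, fgen]
    fin_cases k <;> decide
  · simp only [zσ, za, map_mul, map_inv, map_pow, FreeGroup.lift_apply_of, fgen]
    fin_cases k <;> decide
  · have hmap : List.map (⇑(FreeGroup.lift (fgen n))) (List.ofFn (zσ n))
        = List.replicate (n-1) (Multiplicative.ofAdd ((0,0,1) : ℤ × ℤ × ZMod 2)) := by
      rw [List.map_ofFn]
      have : (⇑(FreeGroup.lift (fgen n)) ∘ zσ n)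
          = fun _ => Multiplicative.ofAdd ((0,0,1) : ℤ × ℤ × ZMod 2) := by
        funext i; simp [zσ, fgen]
      rw [this, List.ofFn_const]
    have h1 : FreeGroup.lift (fgen n) (List.ofFn (zσ n)).prod
        = (Multiplicative.ofAdd ((0,0,1) : ℤ × ℤ × ZMod 2)) ^ (n-1) := by
      rw [map_list_prod, hmap, List.prod_replicate]
    have h2 : FreeGroup.lift (fgen n) (List.ofFn (zσ n)).reverse.prod
        = (Multiplicative.ofAdd ((0,0,1) : ℤ × ℤ × ZMod 2)) ^ (n-1) := by
      rw [map_list_prod, List.map_reverse, hmap, List.reverse_replicate, List.prod_replicate]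
    simp only [zariskiFullProd, map_mul, map_inv, h1, h2, zσ, za, FreeGroup.lift_apply_of, fgen]
    rw [← pow_add]
    have h4 : ((Multiplicative.ofAdd ((0,0,1) : ℤ × ℤ × ZMod 2)) ^ (n-1+(n-1))) =
        Multiplicative.ofAdd ((0,0,(n-1+(n-1) : ℕ)) : ℤ × ℤ × ZMod 2) := by
      rw [← ofAdd_nsmul]
      congr 1
      simp [Prod.ext_iff]
    have h3 : ((n-1+(n-1) : ℕ) : ZMod 2) = 0 := by
      have : (n-1+(n-1)) = 2 * (n-1) := by ring
      rw [this, Nat.cast_mul]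
      simp
      exact Or.inl (by decide)
    rw [h4, h3]
    decide
  · simp only [zσ, za, map_mul, map_inv, map_pow, FreeGroup.lift_apply_of, fgen]
    decide

variable (n : ℕ)

/-- image in the abelianization of the presented group of a free-group word -/
def θ : FreeGroup (ZariskiGen n) →* Abelianization (PresentedGroup (zariskiRels n)) :=
  (Abelianization.of).comp (PresentedGroup.mk (zariskiRels n))

lemma θ_rel : ∀ r ∈ zariskiRels n, θ n r = 1 := by
  intro r hr
  have : PresentedGroup.mk (zariskiRels n) r = 1 :=
    (QuotientGroup.eq_one_iff r).mpr (Subgroup.subset_normalClosure hr)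
  simp [θ, this]

/-- image of σ generators in the abelianization -/
def sA (i : Fin (n-1)) : Abelianization (PresentedGroup (zariskiRels n)) :=
  Abelianization.of (PresentedGroup.of (Sum.inl i))

/-- image of a generators in the abelianization -/
def aA (k : Fin 2) : Abelianization (PresentedGroup (zariskiRels n)) :=
  Abelianization.of (PresentedGroup.of (Sum.inr k))

lemma θ_zσ (i : Fin (n-1)) : θ n (zσ n i) = sA n i := rfl
lemma θ_za (k : Fin 2) : θ n (za n k) = aA n k := rfl

variable (hn : 5 ≤ n)

/-- the index 0 -/
def i0 : Fin (n-1) := ⟨0, by omega⟩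

lemma sA_eq : ∀ i : Fin (n-1), sA n i = sA n (i0 n hn) := by
  have key : ∀ m : ℕ, ∀ h : m < n-1, sA n ⟨m, h⟩ = sA n (i0 n hn) := by
    intro m
    induction m with
    | zero => intro h; rfl
    | succ m ih =>
      intro h
      have hm : m < n - 1 := by omega
      have hrel : (zσ n ⟨m,hm⟩ * zσ n ⟨m+1,h⟩ * zσ n ⟨m,hm⟩ *
          (zσ n ⟨m+1,h⟩ * zσ n ⟨m,hm⟩ * zσ n ⟨m+1,h⟩)⁻¹) ∈ zariskiRels n := by
        unfold zariskiRels
        exact Or.inl (Or.inl (Or.inl (Or.inl (Or.inr ⟨⟨m,hm⟩, ⟨m+1,h⟩, rfl, rfl⟩))))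
      have h1 := θ_rel n _ hrel
      rw [map_mul, map_inv, mul_inv_eq_one, map_mul, map_mul, map_mul, map_mul,
        θ_zσ, θ_zσ] at h1
      have h2 : sA n ⟨m,hm⟩ = sA n ⟨m+1,h⟩ := braid_cancel h1
      rw [← h2]
      exact ih hm
  intro i
  have := key i.1 i.2
  simpa using this

lemma sA_sq : sA n (i0 n hn) ^ 2 = 1 := by
  have hrel : (za n 1 * (zσ n (i0 n hn))⁻¹ * (za n 0)⁻¹ * zσ n (i0 n hn) * (za n 1)⁻¹ *
      (zσ n (i0 n hn))⁻¹ * za n 0 * zσ n (i0 n hn) * ((zσ n (i0 n hn)) ^ 2)⁻¹)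
      ∈ zariskiRels n := by
    unfold zariskiRels
    exact Or.inr ⟨i0 n hn, rfl, rfl⟩
  have h1 := θ_rel n _ hrel
  simp only [map_mul, map_inv, map_pow, θ_zσ, θ_za] at h1
  rw [mul_inv_eq_one] at h1
  rw [← h1]
  exact word_eq_one _ _ _

/-- third component of the inverse map -/
def f3 : ZMod 2 →+ Additive (Abelianization (PresentedGroup (zariskiRels n))) :=
  ZMod.lift 2 ⟨zmultiplesHom _ (Additive.ofMul (sA n (i0 n hn))), by
    rw [zmultiplesHom_apply, natCast_zsmul]
    show Additive.ofMul (sA n (i0 n hn) ^ 2) = 0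
    rw [sA_sq n hn]
    rfl⟩

lemma f3_one : f3 n hn (1 : ZMod 2) = Additive.ofMul (sA n (i0 n hn)) := by
  unfold f3
  rw [show ((1 : ZMod 2)) = (((1:ℤ) : ZMod 2)) by norm_num, ZMod.lift_coe]
  simp [zmultiplesHom_apply]

/-- the inverse map, additively -/
def ψadd : ℤ × ℤ × ZMod 2 →+ Additive (Abelianization (PresentedGroup (zariskiRels n))) :=
  ((zmultiplesHom _ (Additive.ofMul (aA n 0))).comp (AddMonoidHom.fst _ _)) +
  ((zmultiplesHom _ (Additive.ofMul (aA n 1))).comp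
    ((AddMonoidHom.fst _ _).comp (AddMonoidHom.snd ℤ (ℤ × ZMod 2)))) +
  ((f3 n hn).comp ((AddMonoidHom.snd _ _).comp (AddMonoidHom.snd ℤ (ℤ × ZMod 2))))

/-- the inverse map -/
def ψ : T →* Abelianization (PresentedGroup (zariskiRels n)) where
  toFun t := Additive.toMul (ψadd n hn (Multiplicative.toAdd t))
  map_one' := by simp
  map_mul' x y := by simp

lemma ψ_apply (x y : ℤ) (z : ZMod 2) :
    ψ n hn (Multiplicative.ofAdd (x, y, z)) =
      (aA n 0) ^ x * (aA n 1) ^ y * Additive.toMul (f3 n hn z) := by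
  show Additive.toMul (ψadd n hn (x, y, z)) = _
  simp [ψadd, zmultiplesHom_apply, toMul_add]

/-- the forward map -/
def φbar : Abelianization (PresentedGroup (zariskiRels n)) →* T :=
  Abelianization.lift (PresentedGroup.toGroup (fgen_rels n))

lemma φbar_sA (i : Fin (n-1)) : φbar n (sA n i) = Multiplicative.ofAdd (0, 0, 1) := by
  simp [φbar, sA, fgen]

lemma φbar_aA0 : φbar n (aA n 0) = Multiplicative.ofAdd (1, 0, 0) := by
  simp [φbar, aA, fgen]

lemma φbar_aA1 : φbar n (aA n 1) = Multiplicative.ofAdd (0, 1, 0) := by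
  simp [φbar, aA, fgen]

lemma left_inv : ∀ a, ψ n hn (φbar n a) = a := by
  have hcomp : (ψ n hn).comp (φbar n) = MonoidHom.id _ := by
    apply Abelianization.hom_ext
    apply PresentedGroup.ext
    intro x
    simp only [MonoidHom.comp_apply, MonoidHom.id_apply]
    cases x with
    | inl i =>
      have h1 : φbar n (Abelianization.of (PresentedGroup.of (Sum.inl i))) =
          Multiplicative.ofAdd ((0,0,1) : ℤ × ℤ × ZMod 2) := φbar_sA n i
      rw [h1, ψ_apply, f3_one]
      simpa [sA] using (sA_eq n hn i).symm
    | inr k =>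
      fin_cases k
      · show (ψ n hn) ((φbar n) (aA n 0)) = aA n 0
        rw [φbar_aA0, ψ_apply, map_zero]
        simp [aA]
      · show (ψ n hn) ((φbar n) (aA n 1)) = aA n 1
        rw [φbar_aA1, ψ_apply, map_zero]
        simp [aA]
  intro a
  exact DFunLike.congr_fun hcomp a

lemma right_inv : ∀ t, φbar n (ψ n hn t) = t := by
  intro t
  rcases ht : Multiplicative.toAdd t with ⟨x, y, z⟩
  have h2 : t = Multiplicative.ofAdd (x, y, z) := by rw [← ht]; rfl
  rw [h2, ψ_apply, map_mul, map_mul, map_zpow, map_zpow, φbar_aA0, φbar_aA1]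
  have hz : ∀ w : ZMod 2, w = 0 ∨ w = 1 := by decide
  have hx : (Multiplicative.ofAdd ((1,0,0) : ℤ × ℤ × ZMod 2)) ^ x
      = Multiplicative.ofAdd ((x,0,0) : ℤ × ℤ × ZMod 2) := by
    rw [← ofAdd_zsmul]
    congr 1
    simp [Prod.ext_iff]
  have hy : (Multiplicative.ofAdd ((0,1,0) : ℤ × ℤ × ZMod 2)) ^ y
      = Multiplicative.ofAdd ((0,y,0) : ℤ × ℤ × ZMod 2) := by
    rw [← ofAdd_zsmul]
    congr 1
    simp [Prod.ext_iff]
  rw [hx, hy]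
  rcases hz z with rfl | rfl
  · have h3 : (f3 n hn) ((0:ZMod 2)) = 0 := map_zero _
    rw [h3]
    show Multiplicative.ofAdd ((x,0,0) : ℤ × ℤ × ZMod 2) *
      Multiplicative.ofAdd ((0,y,0) : ℤ × ℤ × ZMod 2) * φbar n 1 = _
    rw [map_one, mul_one, ← ofAdd_add]
    congr 1
    simp
  · rw [f3_one]
    show Multiplicative.ofAdd ((x,0,0) : ℤ × ℤ × ZMod 2) *
      Multiplicative.ofAdd ((0,y,0) : ℤ × ℤ × ZMod 2) * φbar n (sA n (i0 n hn)) = _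
    rw [φbar_sA, ← ofAdd_add, ← ofAdd_add]
    congr 1
    simp

end Stmt17

theorem stmt_17 (n : ℕ) (hn : 5 ≤ n) :
    Nonempty (Abelianization (PresentedGroup (zariskiRels n)) ≃*
      Multiplicative (ℤ × ℤ × ZMod 2)) := by
  exact ⟨{ toFun := Stmt17.φbar n, invFun := Stmt17.ψ n hn,
           left_inv := Stmt17.left_inv n hn, right_inv := Stmt17.right_inv n hn,
           map_mul' := (Stmt17.φbar n).map_mul }⟩
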